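/- Let R ≥ 1, let a ≥ 2 be an even integer, let λ_1, …, λ_R be positive reals, fix k ∈ {1,…,R}, and set C_i = (λ_k/λ_i)^{1/(a−1)} for each i ≠ k. Then for every x > 0, the R-dimensional Lebesgue measure of the set { v ∈ ℝ^R : 0 < v_k < x and for every i ≠ k, −x < v_i < C_i v_k } equals x^R · ∑_{T ⊆ {1,…,R}\{k}} ( ∏_{i∈T} C_i ) / (|T| + 1), where the sum runs over all subsets T of {1,…,R}\{k}. -/

import Mathlib

open Filter Topology MeasureTheory
open scoped ENNReal

lemma aux_integral_prod_linear {ι : Type*} [DecidableEq ι] (s : Finset ι) (C : ι → ℝ)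
    (x : ℝ) :
    ∫ t in (0:ℝ)..x, ∏ i ∈ s, (C i * t + x)
      = x ^ (s.card + 1) * ∑ T ∈ s.powerset, (∏ i ∈ T, C i) / ((T.card : ℝ) + 1) := by
  have h1 : ∀ t : ℝ, ∏ i ∈ s, (C i * t + x)
      = ∑ T ∈ s.powerset, (∏ i ∈ T, C i) * t ^ T.card * x ^ (s.card - T.card) := by
    intro t
    rw [Finset.prod_add]
    refine Finset.sum_congr rfl fun T hT => ?_
    rw [Finset.prod_const, Finset.prod_mul_distrib, Finset.prod_const,
      Finset.card_sdiff_of_subset (Finset.mem_powerset.mp hT)]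
  simp_rw [h1]
  rw [intervalIntegral.integral_finset_sum (fun T _ => by
    exact ((continuous_const.mul (continuous_pow _)).mul continuous_const).intervalIntegrable 0 x)]
  rw [Finset.mul_sum]
  refine Finset.sum_congr rfl fun T hT => ?_
  have hcard : T.card ≤ s.card := Finset.card_le_card (Finset.mem_powerset.mp hT)
  have hxpow : x ^ (s.card - T.card) * x ^ (T.card + 1) = x ^ (s.card + 1) := by
    rw [← pow_add]; congr 1; omega
  have hint : ∫ t in (0:ℝ)..x, (∏ i ∈ T, C i) * t ^ T.card * x ^ (s.card - T.card)
      = (∏ i ∈ T, C i) * x ^ (s.card - T.card) * (x ^ (T.card + 1) / ((T.card : ℝ) + 1)) := by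
    have h2 : ∀ t : ℝ, (∏ i ∈ T, C i) * t ^ T.card * x ^ (s.card - T.card)
        = ((∏ i ∈ T, C i) * x ^ (s.card - T.card)) * t ^ T.card := fun t => by ring
    simp_rw [h2]
    rw [intervalIntegral.integral_const_mul, integral_pow]
    ring
  rw [hint]
  rw [div_eq_mul_inv, div_eq_mul_inv]
  linear_combination (∏ i ∈ T, C i) * ((T.card : ℝ) + 1)⁻¹ * hxpow

/-- For even `a`, the Lebesgue volume of the truncated basin of attraction of the
`k`-th eigenvector equals `x^R · ∑_{T ⊆ [R]\{k}} (∏_{i∈T} C_i)/(|T|+1)`. -/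
theorem stmt6 (R : ℕ) (hR : 1 ≤ R) (a : ℕ) (ha : 2 ≤ a) (haeven : Even a)
    (lam : Fin R → ℝ) (hpos : ∀ i, 0 < lam i)
    (k : Fin R) (x : ℝ) (hx : 0 < x) :
    volume {v : Fin R → ℝ | 0 < v k ∧ v k < x ∧ ∀ i, i ≠ k →
        -x < v i ∧ v i < (lam k / lam i) ^ (((a : ℝ) - 1)⁻¹) * v k}
      = ENNReal.ofReal
        (x ^ R * ∑ T ∈ (Finset.univ.erase k).powerset,
          (∏ i ∈ T, (lam k / lam i) ^ (((a : ℝ) - 1)⁻¹)) / ((T.card : ℝ) + 1)) := by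
  classical
  set C : Fin R → ℝ := fun i => (lam k / lam i) ^ (((a : ℝ) - 1)⁻¹) with hCdef
  have hC : ∀ i, 0 < C i := fun i => Real.rpow_pos_of_pos (div_pos (hpos k) (hpos i)) _
  letI : Unique {i : Fin R // i = k} := ⟨⟨⟨k, rfl⟩⟩, fun j => Subtype.ext j.2⟩
  letI F : Fintype {i : Fin R // i = k} := Unique.fintype
  set e := MeasurableEquiv.piEquivPiSubtypeProd (fun _ : Fin R => ℝ) (fun i => i = k) with he
  set A : Set (({i : Fin R // i = k} → ℝ) × ({i : Fin R // ¬ i = k} → ℝ)) :=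
    {q | (0 < q.1 ⟨k, rfl⟩ ∧ q.1 ⟨k, rfl⟩ < x) ∧
      ∀ i : {i : Fin R // ¬ i = k}, -x < q.2 i ∧ q.2 i < C i.1 * q.1 ⟨k, rfl⟩} with hA
  have hS : {v : Fin R → ℝ | 0 < v k ∧ v k < x ∧ ∀ i, i ≠ k →
      -x < v i ∧ v i < C i * v k} = e ⁻¹' A := by
    ext v
    simp only [Set.mem_setOf_eq, Set.mem_preimage, hA, he,
      MeasurableEquiv.piEquivPiSubtypeProd, MeasurableEquiv.coe_mk,
      Equiv.piEquivPiSubtypeProd, Equiv.coe_fn_mk]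
    constructor
    · rintro ⟨h1, h2, h3⟩; exact ⟨⟨h1, h2⟩, fun i => h3 i.1 i.2⟩
    · rintro ⟨⟨h1, h2⟩, h3⟩; exact ⟨h1, h2, fun i hi => h3 ⟨i, hi⟩⟩
  have hm1 : Measurable fun q : (({i : Fin R // i = k} → ℝ) × ({i : Fin R // ¬ i = k} → ℝ)) =>
      q.1 ⟨k, rfl⟩ := (measurable_pi_apply _).comp measurable_fst
  have hAm : MeasurableSet A := by
    have hA2 : A = ({q | 0 < q.1 ⟨k, rfl⟩} ∩ {q | q.1 ⟨k, rfl⟩ < x}) ∩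
        ⋂ i : {i : Fin R // ¬ i = k},
          ({q | -x < q.2 i} ∩ {q | q.2 i < C i.1 * q.1 ⟨k, rfl⟩}) := by
      ext q
      simp only [hA, Set.mem_setOf_eq, Set.mem_inter_iff, Set.mem_iInter]
    rw [hA2]
    refine ((measurableSet_lt measurable_const hm1).inter
      (measurableSet_lt hm1 measurable_const)).inter (MeasurableSet.iInter fun i => ?_)
    have hm2 : Measurable fun q : (({i : Fin R // i = k} → ℝ) × ({i : Fin R // ¬ i = k} → ℝ)) =>
        q.2 i := (measurable_pi_apply _).comp measurable_snd
    exact (measurableSet_lt measurable_const hm2).inter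
      (measurableSet_lt hm2 (hm1.const_mul _))
  rw [hS, (volume_preserving_piEquivPiSubtypeProd (fun _ : Fin R => ℝ)
    (fun i => i = k)).measure_preimage hAm.nullMeasurableSet]
  rw [Measure.volume_eq_prod, Measure.prod_apply hAm]
  have hslice : ∀ y : {i : Fin R // i = k} → ℝ,
      volume (Prod.mk y ⁻¹' A)
        = Set.indicator (Set.Ioo (0:ℝ) x)
            (fun t => ∏ i ∈ Finset.univ.erase k, ENNReal.ofReal (C i * t + x)) (y ⟨k, rfl⟩) := by
    intro y
    by_cases hy : y ⟨k, rfl⟩ ∈ Set.Ioo (0:ℝ) x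
    · rw [Set.indicator_of_mem hy]
      have hpre : Prod.mk y ⁻¹' A = Set.pi Set.univ
          (fun i : {i : Fin R // ¬ i = k} => Set.Ioo (-x) (C i.1 * y ⟨k, rfl⟩)) := by
        ext z
        simp only [hA, Set.mem_preimage, Set.mem_setOf_eq, Set.mem_pi, Set.mem_univ,
          Set.mem_Ioo, forall_true_left]
        exact ⟨fun h => h.2, fun h => ⟨⟨hy.1, hy.2⟩, h⟩⟩
      rw [hpre, volume_pi_pi]
      simp_rw [Real.volume_Ioo, sub_neg_eq_add]
      exact (Finset.prod_subtype (Finset.univ.erase k) (fun i => by simp)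
        fun i => ENNReal.ofReal (C i * y ⟨k, rfl⟩ + x)).symm
    · rw [Set.indicator_of_notMem hy]
      have hpre : Prod.mk y ⁻¹' A = ∅ := by
        ext z
        simp only [hA, Set.mem_preimage, Set.mem_setOf_eq, Set.mem_empty_iff_false, iff_false,
          not_and]
        intro h1
        exact absurd (Set.mem_Ioo.mpr h1) hy
      rw [hpre, measure_empty]
  simp_rw [hslice]
  set g : ℝ → ℝ≥0∞ := Set.indicator (Set.Ioo (0:ℝ) x)
    (fun t => ∏ i ∈ Finset.univ.erase k, ENNReal.ofReal (C i * t + x)) with hgdef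
  have hgm : Measurable g := by
    refine Measurable.indicator ?_ measurableSet_Ioo
    exact Finset.measurable_prod _ fun i _ =>
      ((measurable_id.const_mul (C i)).add_const x).ennreal_ofReal
  have hdef : ∀ y : {i : Fin R // i = k} → ℝ, y ⟨k, rfl⟩ = y default :=
    fun y => congrArg y (Subsingleton.elim _ _)
  have hcomp : ∫⁻ y : {i : Fin R // i = k} → ℝ, g (y ⟨k, rfl⟩) = ∫⁻ t, g t := by
    simp_rw [hdef]
    exact (volume_preserving_funUnique {i : Fin R // i = k} ℝ).lintegral_comp hgm
  have hmeq : ∀ F1 F2 : Fintype {i : Fin R // i = k},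
      @volume ({i : Fin R // i = k} → ℝ)
          (@MeasureSpace.pi {i : Fin R // i = k} F1 (fun _ => ℝ) fun _ => Real.measureSpace)
        = @volume ({i : Fin R // i = k} → ℝ)
          (@MeasureSpace.pi {i : Fin R // i = k} F2 (fun _ => ℝ) fun _ => Real.measureSpace) := by
    intro F1 F2
    congr!
  rw [hmeq _ F, hcomp, hgdef, lintegral_indicator measurableSet_Ioo]
  have hprod : ∀ t ∈ Set.Ioo (0:ℝ) x,
      (∏ i ∈ Finset.univ.erase k, ENNReal.ofReal (C i * t + x))
        = ENNReal.ofReal (∏ i ∈ Finset.univ.erase k, (C i * t + x)) := fun t ht =>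
    (ENNReal.ofReal_prod_of_nonneg fun i _ =>
      add_nonneg (mul_nonneg (hC i).le ht.1.le) hx.le).symm
  rw [setLIntegral_congr_fun measurableSet_Ioo hprod]
  have hf_int : IntegrableOn (fun t => ∏ i ∈ Finset.univ.erase k, (C i * t + x))
      (Set.Ioo 0 x) := by
    apply (Continuous.integrableOn_Icc ?_).mono_set Set.Ioo_subset_Icc_self
    exact continuous_finset_prod _ fun i _ => (continuous_const.mul continuous_id).add
      continuous_const
  have hf_nn : 0 ≤ᵐ[volume.restrict (Set.Ioo (0:ℝ) x)]
      fun t => ∏ i ∈ Finset.univ.erase k, (C i * t + x) := by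
    filter_upwards [self_mem_ae_restrict measurableSet_Ioo] with t ht
    exact Finset.prod_nonneg fun i _ => add_nonneg (mul_nonneg (hC i).le ht.1.le) hx.le
  rw [← MeasureTheory.ofReal_integral_eq_lintegral_ofReal hf_int hf_nn]
  congr 1
  have hIoo : ∫ t in Set.Ioo (0:ℝ) x, ∏ i ∈ Finset.univ.erase k, (C i * t + x)
      = ∫ t in (0:ℝ)..x, ∏ i ∈ Finset.univ.erase k, (C i * t + x) := by
    rw [intervalIntegral.integral_of_le hx.le, integral_Ioc_eq_integral_Ioo]
  rw [hIoo, aux_integral_prod_linear]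
  have hcard : (Finset.univ.erase k).card + 1 = R := by
    rw [Finset.card_erase_of_mem (Finset.mem_univ k), Finset.card_univ, Fintype.card_fin]
    omega
  rw [hcard]
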